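/- Let A₃ be the 3×3 complex matrix with ones strictly above the diagonal and zeros elsewhere. Then the closed rectangle { z ∈ ℂ : −1/2 ≤ Re z ≤ 0, |Im z| ≤ √3/6 } is contained in the numerical range W(A₃); that is, for every such z there exists x ∈ ℂ³ with ‖x‖₂ = 1 and x* A₃ x = z. -/

import Mathlib

open scoped BigOperators

set_option maxHeartbeats 1000000 in
/-- The closed rectangle {z : −1/2 ≤ Re z ≤ 0, |Im z| ≤ √3/6} is contained in the
numerical range of the 3×3 matrix with ones strictly above the diagonal. -/
theorem rectangle_in_range (z : ℂ) (h1 : -(1 / 2) ≤ z.re) (h2 : z.re ≤ 0)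
    (h3 : |z.im| ≤ Real.sqrt 3 / 6) :
    let A : Matrix (Fin 3) (Fin 3) ℂ := fun i j => if (i : ℕ) < (j : ℕ) then 1 else 0
    ∃ x : Fin 3 → ℂ, ∑ i, ‖x i‖ ^ 2 = 1 ∧
      (∑ i, ∑ j, (starRingEnd ℂ) (x i) * A i j * x j) = z := by
  intro A
  have hA : ∀ i j : Fin 3, A i j = if (i : ℕ) < (j : ℕ) then 1 else 0 := fun _ _ => rfl
  set X := z.re with hX
  set Y := z.im with hY
  set p := Real.sqrt ((2 - 2*X)/3) with hpdef
  set q := Real.sqrt ((1 + 2*X)/3) with hqdef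
  set g := Real.sqrt 3 with hgdef
  have hp0 : 0 ≤ p := Real.sqrt_nonneg _
  have hq0 : 0 ≤ q := Real.sqrt_nonneg _
  have hg0 : 0 ≤ g := Real.sqrt_nonneg _
  have hp : p^2 = (2 - 2*X)/3 := Real.sq_sqrt (by linarith)
  have hq : q^2 = (1 + 2*X)/3 := Real.sq_sqrt (by linarith)
  have hg : g^2 = 3 := Real.sq_sqrt (by norm_num)
  set K := (2 - 2*X)/3 * g/6 + p*q with hKdef
  have hqle : q*g/6 ≤ p := by nlinarith [mul_nonneg hq0 hg0]
  have hKg : g/6 ≤ K := by nlinarith [mul_nonneg hq0 (sub_nonneg.2 hqle)]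
  have hgpos : 0 < g := Real.sqrt_pos.2 (by norm_num)
  have hK0 : 0 < K := lt_of_lt_of_le (by positivity) hKg
  have hKY : |Y| ≤ K := le_trans h3 (by rw [hgdef] at hKg ⊢; linarith)
  have hY2 : Y^2 ≤ K^2 := by nlinarith [abs_nonneg Y, sq_abs Y]
  set h := Real.sqrt (K^2 - Y^2) with hhdef
  have hh0 : 0 ≤ h := Real.sqrt_nonneg _
  have hh : h^2 = K^2 - Y^2 := Real.sq_sqrt (by linarith)
  set c : ℝ := h / K with hcdef
  set s : ℝ := Y / K with hsdef
  have hcs : c^2 + s^2 = 1 := by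
    rw [hcdef, hsdef]; field_simp; linarith
  have hsK : s * K = Y := by rw [hsdef]; field_simp
  clear_value X Y p q g K h c s
  refine ⟨![(↑(-p/2 + q*g/3) : ℂ) + ↑(-(p*g/6)) * (↑c + ↑s * Complex.I),
            (↑(p/2 + q*g/3) : ℂ) + ↑(-(p*g/6)) * (↑c + ↑s * Complex.I),
            (↑(q*g/3) : ℂ) + ↑(p*g/3) * (↑c + ↑s * Complex.I)], ?_, ?_⟩
  · rw [Fin.sum_univ_three]
    simp only [Matrix.cons_val_zero, Matrix.cons_val_one, Matrix.head_cons,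
      Matrix.cons_val_two, Matrix.tail_cons]
    have hns : ∀ a b : ℝ, ‖(a:ℂ) + (b:ℂ) * (↑c + ↑s * Complex.I)‖^2
        = (a + b*c)^2 + (b*s)^2 := by
      intro a b
      rw [show (a:ℂ) + (b:ℂ) * (↑c + ↑s * Complex.I)
          = ((a + b*c : ℝ) : ℂ) + ((b*s : ℝ) : ℂ) * Complex.I by push_cast; ring]
      rw [Complex.sq_norm, Complex.normSq_add_mul_I]
    rw [hns, hns, hns]
    linear_combination (p^2*g^2/6) * hcs + (q^2/3 + p^2/6) * hg + hp + hq
  · have hform : ∀ x : Fin 3 → ℂ,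
        (∑ i, ∑ j, (starRingEnd ℂ) (x i) * A i j * x j)
          = (starRingEnd ℂ) (x 0) * x 1 + (starRingEnd ℂ) (x 0) * x 2
            + (starRingEnd ℂ) (x 1) * x 2 := by
      intro x
      simp [Fin.sum_univ_three, hA]
      try ring
    rw [hform]
    simp only [Matrix.cons_val_zero, Matrix.cons_val_one, Matrix.head_cons,
      Matrix.cons_val_two, Matrix.tail_cons]
    simp only [map_add, map_mul, Complex.conj_ofReal, Complex.conj_I]
    rw [Complex.ext_iff]
    constructor
    · simp only [Complex.add_re, Complex.add_im, Complex.mul_re, Complex.mul_im,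
        Complex.sub_re, Complex.sub_im, Complex.neg_re, Complex.neg_im,
        Complex.ofReal_re, Complex.ofReal_im, Complex.I_re, Complex.I_im]
      linear_combination (-(p^2*g^2)/12) * hcs + (q^2/3 - p^2/12) * hg + hq - hp/2 + hX
    · simp only [Complex.add_re, Complex.add_im, Complex.mul_re, Complex.mul_im,
        Complex.sub_re, Complex.sub_im, Complex.neg_re, Complex.neg_im,
        Complex.ofReal_re, Complex.ofReal_im, Complex.I_re, Complex.I_im]
      linear_combination (s*g/6) * hp + (s*p*q/3) * hg + hsK - s * hKdef + hY
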